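/- Let 𝕂 be a field of characteristic 0, let ξ₁,…,ξ_r ∈ 𝕂ⁿ be pairwise distinct, and for each i = 1,…,r let α_{i,1},…,α_{i,μᵢ} ∈ ℕⁿ be pairwise distinct multi-indices. Then the linear forms p ↦ (∂^{α_{i,j}} p)(ξᵢ) on 𝕂[x₁,…,xₙ] (for i = 1,…,r and j = 1,…,μᵢ), which correspond to the series y^{α_{i,j}} e^{⟨ξᵢ,y⟩}, are linearly independent in the dual space of 𝕂[x₁,…,xₙ]. -/

import Mathlib

open MvPolynomial

namespace PolyExp

variable {K : Type*} [Field K] {n : ℕ}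

/-- The iterated partial derivative operator `∂^β` on polynomials. -/
noncomputable def pderivPow (β : Fin n →₀ ℕ) :
    Module.End K (MvPolynomial (Fin n) K) :=
  (List.ofFn fun i : Fin n =>
    ((MvPolynomial.pderiv i).toLinearMap : Module.End K (MvPolynomial (Fin n) K)) ^ (β i)).prod

/-- The constant coefficient differential operator `ω(∂) = Σ_β ω_β ∂^β`. -/
noncomputable def diffOp (ω : MvPolynomial (Fin n) K) :
    Module.End K (MvPolynomial (Fin n) K) :=
  ∑ β ∈ ω.support, ω.coeff β • pderivPow β

/-- The evaluation linear form `e_ξ : p ↦ p(ξ)`. -/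
noncomputable def evalDual (ξ : Fin n → K) : Module.Dual K (MvPolynomial (Fin n) K) :=
  (MvPolynomial.aeval ξ).toLinearMap

/-- The polynomial-exponential linear form `ω·e_ξ : p ↦ (ω(∂)p)(ξ)`. -/
noncomputable def polyExpDual (ω : MvPolynomial (Fin n) K) (ξ : Fin n → K) :
    Module.Dual K (MvPolynomial (Fin n) K) :=
  evalDual ξ ∘ₗ diffOp ω

/-- The Hankel operator `H_σ : p ↦ (q ↦ σ(p·q))`. -/
noncomputable def hankel (σ : Module.Dual K (MvPolynomial (Fin n) K)) :
    MvPolynomial (Fin n) K →ₗ[K] Module.Dual K (MvPolynomial (Fin n) K) :=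
  (LinearMap.llcomp K (MvPolynomial (Fin n) K) (MvPolynomial (Fin n) K) K σ) ∘ₗ
    (LinearMap.mul K (MvPolynomial (Fin n) K))

/-- `μ(ω)`: the dimension of the span of all partial derivatives of `ω`. -/
noncomputable def mu (ω : MvPolynomial (Fin n) K) : ℕ :=
  Module.finrank K (Submodule.span K (Set.range fun β : Fin n →₀ ℕ => pderivPow β ω))

/-- The kernel `I_σ` of the Hankel operator, as an ideal. -/
def hankelKer (σ : Module.Dual K (MvPolynomial (Fin n) K)) : Ideal (MvPolynomial (Fin n) K) where
  carrier := {p | ∀ q, σ (p * q) = 0}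
  add_mem' := by
    intro a b ha hb q
    rw [add_mul, map_add, ha q, hb q, add_zero]
  zero_mem' := by
    intro q
    rw [zero_mul, map_zero]
  smul_mem' := by
    intro c p hp q
    rw [smul_eq_mul, mul_comm c p, mul_assoc]
    exact hp (c * q)

end PolyExp

namespace Statement2Aux

variable {K : Type*} [Field K] {n : ℕ}

lemma pderiv_linpow_ne {t j : Fin n} (h : j ≠ t) (c : K) (b : ℕ) :
    pderiv j ((X t - C c)^b : MvPolynomial (Fin n) K) = 0 := by
  rw [pderiv_pow]; simp [pderiv_X_of_ne h.symm]

/-- pass-through of a power of one partial derivative over a factor it kills -/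
lemma pow_pd_mul (t : Fin n) (g : ℕ) (f : MvPolynomial (Fin n) K)
    (hf : pderiv t f = 0) (q : MvPolynomial (Fin n) K) :
    (((pderiv t).toLinearMap : Module.End K (MvPolynomial (Fin n) K)) ^ g) (f * q)
      = f * ((((pderiv t).toLinearMap : Module.End K (MvPolynomial (Fin n) K)) ^ g) q) := by
  induction g generalizing q with
  | zero => simp
  | succ g ih =>
      rw [pow_succ, Module.End.mul_apply, Module.End.mul_apply]
      have h1 : ((pderiv t).toLinearMap : Module.End K (MvPolynomial (Fin n) K)) (f * q)
          = f * ((pderiv t).toLinearMap q) := by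
        show pderiv t (f * q) = f * pderiv t q
        rw [pderiv_mul, hf, zero_mul, zero_add]
      rw [h1, ih]

lemma listProd_mul (g : Fin n → ℕ) (f : MvPolynomial (Fin n) K) :
    ∀ l : List (Fin n), (∀ t ∈ l, pderiv t f = 0) → ∀ q,
    ((l.map fun t => ((pderiv t).toLinearMap : Module.End K (MvPolynomial (Fin n) K)) ^ g t).prod) (f * q)
      = f * (((l.map fun t => ((pderiv t).toLinearMap : Module.End K (MvPolynomial (Fin n) K)) ^ g t).prod) q) := by
  intro l
  induction l with
  | nil => intro _ q; simp
  | cons a l ih =>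
      intro h q
      rw [List.map_cons, List.prod_cons, Module.End.mul_apply, Module.End.mul_apply,
        ih (fun t ht => h t (List.mem_cons_of_mem a ht)) q,
        pow_pd_mul a (g a) f (h a (List.mem_cons_self (a := a) (l := l)))]

/-- `F` lowers divisibility by powers of `c` by at most `k`. -/
def Lowers (c : MvPolynomial (Fin n) K) (F : Module.End K (MvPolynomial (Fin n) K)) (k : ℕ) : Prop :=
  ∀ N p, c ^ N ∣ p → c ^ (N - k) ∣ F p

lemma lowers_one (c : MvPolynomial (Fin n) K) : Lowers c 1 0 := by
  intro N p h; simpa using h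

lemma Lowers.mul {c : MvPolynomial (Fin n) K} {F G : Module.End K (MvPolynomial (Fin n) K)}
    {k m : ℕ} (hF : Lowers c F k) (hG : Lowers c G m) : Lowers c (F * G) (k + m) := by
  intro N p h
  have h1 := hG N p h
  have h2 := hF (N - m) _ h1
  rwa [Nat.sub_sub, Nat.add_comm] at h2

lemma lowers_pd (c : MvPolynomial (Fin n) K) (t : Fin n) :
    Lowers c ((pderiv t).toLinearMap : Module.End K (MvPolynomial (Fin n) K)) 1 := by
  rintro N p ⟨q, rfl⟩
  have h1 : ((pderiv t).toLinearMap : Module.End K (MvPolynomial (Fin n) K)) (c ^ N * q)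
      = ((N : MvPolynomial (Fin n) K) * c ^ (N-1) * pderiv t c) * q + c ^ N * pderiv t q := by
    show pderiv t (c ^ N * q) = _
    rw [pderiv_mul, pderiv_pow]
  rw [h1]
  apply dvd_add
  · exact ((dvd_mul_left _ _).mul_right _).mul_right _
  · exact (pow_dvd_pow c (Nat.sub_le N 1)).mul_right _

lemma lowers_pd_zero (c : MvPolynomial (Fin n) K) (t : Fin n) (hc : pderiv t c = 0) :
    Lowers c ((pderiv t).toLinearMap : Module.End K (MvPolynomial (Fin n) K)) 0 := by
  rintro N p ⟨q, rfl⟩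
  have h1 : ((pderiv t).toLinearMap : Module.End K (MvPolynomial (Fin n) K)) (c ^ N * q)
      = c ^ N * pderiv t q := by
    show pderiv t (c ^ N * q) = _
    rw [pderiv_mul, pderiv_pow, hc, mul_zero, zero_mul, zero_add]
  rw [h1, Nat.sub_zero]
  exact dvd_mul_right _ _

lemma Lowers.pow {c : MvPolynomial (Fin n) K} {F : Module.End K (MvPolynomial (Fin n) K)} {k : ℕ}
    (h : Lowers c F k) : ∀ g, Lowers c (F ^ g) (g * k) := by
  intro g
  induction g with
  | zero => simpa using lowers_one c
  | succ g ih =>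
      have h2 := ih.mul h
      have h3 : g * k + k = (g + 1) * k := (Nat.succ_mul g k).symm
      rw [h3, ← pow_succ] at h2
      exact h2

lemma lowers_ofFn (c : MvPolynomial (Fin n) K) :
    ∀ (m : ℕ) (F : Fin m → Module.End K (MvPolynomial (Fin n) K)) (k : Fin m → ℕ),
    (∀ i, Lowers c (F i) (k i)) → Lowers c (List.ofFn F).prod (∑ i, k i) := by
  intro m
  induction m with
  | zero => intro F k _; simpa using lowers_one c
  | succ m ih =>
      intro F k hF
      rw [List.ofFn_succ, List.prod_cons, Fin.sum_univ_succ]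
      exact (hF 0).mul (ih (fun i => F i.succ) (fun i => k i.succ) (fun i => hF i.succ))

lemma lowers_pderivPow_total (c : MvPolynomial (Fin n) K) (γ : Fin n →₀ ℕ) :
    Lowers c (PolyExp.pderivPow γ) (∑ t, γ t) := by
  rw [PolyExp.pderivPow]
  have h0 : ∑ t : Fin n, γ t = ∑ t : Fin n, γ t * 1 := by simp
  rw [h0]
  exact lowers_ofFn c n _ _ (fun i => (lowers_pd c i).pow (γ i))

lemma lowers_pderivPow_single (t0 : Fin n) (c : MvPolynomial (Fin n) K)
    (hc : ∀ j, j ≠ t0 → pderiv j c = 0) (γ : Fin n →₀ ℕ) :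
    Lowers c (PolyExp.pderivPow γ) (γ t0) := by
  rw [PolyExp.pderivPow]
  have h := lowers_ofFn c n (fun i => ((pderiv i).toLinearMap : Module.End K (MvPolynomial (Fin n) K)) ^ γ i)
    (fun i => if i = t0 then γ i else 0) ?_
  · have hs : (∑ i : Fin n, if i = t0 then γ i else 0) = γ t0 := by
      rw [Finset.sum_ite_eq' Finset.univ t0 (fun i => γ i)]; simp
    rwa [hs] at h
  · intro i
    by_cases hi : i = t0
    · subst hi
      simpa using (lowers_pd c i).pow (γ i)
    · have := (lowers_pd_zero c i (hc i hi)).pow (γ i)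
      simpa [hi] using this

lemma aeval_zero_of_dvd (ξ : Fin n → K) {c p : MvPolynomial (Fin n) K}
    (h : c ∣ p) (hc : aeval ξ c = 0) : aeval ξ p = 0 := by
  obtain ⟨d, rfl⟩ := h
  rw [map_mul, hc, zero_mul]

/-- univariate evaluation lemma -/
lemma eval_pd_pow (ξ : Fin n → K) (t : Fin n) :
    ∀ (m : ℕ) (w : MvPolynomial (Fin n) K),
    aeval ξ ((((pderiv t).toLinearMap : Module.End K (MvPolynomial (Fin n) K)) ^ m)
        ((X t - C (ξ t))^m * w)) = (Nat.factorial m : K) * aeval ξ w := by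
  intro m
  induction m with
  | zero => intro w; simp
  | succ m ih =>
      intro w
      set c : MvPolynomial (Fin n) K := X t - C (ξ t) with hcdef
      have hc1 : pderiv t c = 1 := by simp [hcdef]
      have hcev : aeval ξ c = 0 := by simp [hcdef]
      rw [pow_succ, Module.End.mul_apply]
      have hz : ((pderiv t).toLinearMap : Module.End K (MvPolynomial (Fin n) K)) (c ^ (m+1) * w)
          = ((m+1 : ℕ) : MvPolynomial (Fin n) K) * (c ^ m * w) + c ^ (m+1) * pderiv t w := by
        show pderiv t (c ^ (m+1) * w) = _
        rw [pderiv_mul, pderiv_pow, hc1, mul_one, Nat.add_sub_cancel]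
        ring
      rw [hz]
      have hnsmul : ((m+1 : ℕ) : MvPolynomial (Fin n) K) * (c ^ m * w) = (m+1) • (c ^ m * w) :=
        (nsmul_eq_mul _ _).symm
      rw [hnsmul, map_add, map_nsmul, map_add, map_nsmul, ih]
      have hzero : aeval ξ ((((pderiv t).toLinearMap : Module.End K (MvPolynomial (Fin n) K)) ^ m)
          (c ^ (m+1) * pderiv t w)) = 0 := by
        have hlow := (lowers_pd c t).pow m
        rw [mul_one] at hlow
        have hdvd := hlow (m+1) (c ^ (m+1) * pderiv t w) (dvd_mul_right _ _)
        rw [Nat.add_sub_cancel_left, pow_one] at hdvd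
        exact aeval_zero_of_dvd ξ hdvd hcev
      rw [hzero, add_zero, nsmul_eq_mul]
      push_cast [Nat.factorial_succ]
      ring

lemma eval_list (ξ : Fin n → K) (β : Fin n → ℕ) :
    ∀ l : List (Fin n), l.Nodup → ∀ w : MvPolynomial (Fin n) K,
    aeval ξ (((l.map fun t => ((pderiv t).toLinearMap : Module.End K (MvPolynomial (Fin n) K)) ^ β t).prod)
        (((l.map fun t => ((X t - C (ξ t) : MvPolynomial (Fin n) K)) ^ β t).prod) * w))
      = ((l.map fun t => ((Nat.factorial (β t) : K))).prod) * aeval ξ w := by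
  intro l
  induction l with
  | nil => intro _ w; simp
  | cons a l ih =>
      intro hnd w
      rw [List.nodup_cons] at hnd
      obtain ⟨ha, hnd⟩ := hnd
      rw [List.map_cons, List.prod_cons, Module.End.mul_apply,
        List.map_cons, List.prod_cons, mul_assoc,
        listProd_mul β ((X a - C (ξ a) : MvPolynomial (Fin n) K) ^ β a) l
          (fun t ht => pderiv_linpow_ne (fun h : t = a => ha (by rw [← h]; exact ht)) _ _) _,
        eval_pd_pow ξ a (β a) _, ih hnd w, List.map_cons, List.prod_cons]
      ring

lemma eval_pderivPow_prod (ξ : Fin n → K) (β : Fin n →₀ ℕ) (w : MvPolynomial (Fin n) K) :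
    aeval ξ ((PolyExp.pderivPow β) ((∏ t : Fin n, ((X t - C (ξ t) : MvPolynomial (Fin n) K))^(β t)) * w))
      = (∏ t : Fin n, ((Nat.factorial (β t) : K))) * aeval ξ w := by
  rw [PolyExp.pderivPow, List.ofFn_eq_map, Fin.prod_univ_def, Fin.prod_univ_def]
  exact eval_list ξ (fun t => β t) _ (List.nodup_finRange n) w

end Statement2Aux

theorem statement2 {K : Type*} [Field K] [CharZero K] {n : ℕ}
    (r : ℕ) (ξ : Fin r → Fin n → K) (hξ : Function.Injective ξ)
    (μ : Fin r → ℕ) (α : (i : Fin r) → Fin (μ i) → (Fin n →₀ ℕ))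
    (hα : ∀ i, Function.Injective (α i)) :
    LinearIndependent K
      (fun q : (i : Fin r) × Fin (μ i) =>
        PolyExp.evalDual (ξ q.1) ∘ₗ PolyExp.pderivPow (α q.1 q.2)) := by
  classical
  rw [Fintype.linearIndependent_iff]
  intro g hg qq
  by_contra hg0
  obtain ⟨i0, j1⟩ := qq
  set S : Finset (Fin (μ i0)) := Finset.univ.filter (fun j => g ⟨i0, j⟩ ≠ 0) with hS
  have hSne : S.Nonempty := ⟨j1, by simp [hS, hg0]⟩
  obtain ⟨j0, hj0S, hj0max⟩ := S.exists_max_image (fun j => ∑ t, α i0 j t) hSne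
  set β : Fin n →₀ ℕ := α i0 j0 with hβ
  have hsep : ∀ k : Fin r, k ≠ i0 → ∃ t, ξ k t ≠ ξ i0 t := by
    intro k hk
    by_contra h; push_neg at h
    exact hk (hξ (funext h))
  -- the separating factor for each k ≠ i0
  let ℓ : Fin r → MvPolynomial (Fin n) K := fun k =>
    if h : k = i0 then 1 else X (hsep k h).choose - C (ξ k (hsep k h).choose)
  set N : ℕ := (Finset.univ.sup fun q : (i : Fin r) × Fin (μ i) => ∑ t, α q.1 q.2 t) + 1 with hN
  have hNlt : ∀ q : (i : Fin r) × Fin (μ i), ∑ t, α q.1 q.2 t < N :=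
    fun q => Nat.lt_succ_of_le (Finset.le_sup (f := fun q : (i : Fin r) × Fin (μ i) => ∑ t, α q.1 q.2 t) (Finset.mem_univ q))
  set G : MvPolynomial (Fin n) K := ∏ k ∈ Finset.univ.erase i0, (ℓ k) ^ N with hG
  set P : MvPolynomial (Fin n) K :=
    (∏ t : Fin n, ((X t - C (ξ i0 t) : MvPolynomial (Fin n) K)) ^ (β t)) * G with hP
  -- value of each functional on P
  set V : ((i : Fin r) × Fin (μ i)) → K :=
    fun q => aeval (ξ q.1) (PolyExp.pderivPow (α q.1 q.2) P) with hV
  have hgP : ∑ q : (i : Fin r) × Fin (μ i), g q * V q = 0 := by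
    have h1 := DFunLike.congr_fun hg P
    simpa [LinearMap.sum_apply, LinearMap.smul_apply, PolyExp.evalDual, smul_eq_mul, hV]
      using h1
  -- vanishing at points other than i0
  have hV0 : ∀ q : (i : Fin r) × Fin (μ i), q.1 ≠ i0 → V q = 0 := by
    rintro ⟨k, j⟩ hk
    have hkmem : k ∈ Finset.univ.erase i0 := Finset.mem_erase.mpr ⟨hk, Finset.mem_univ k⟩
    have hdvdG : (ℓ k) ^ N ∣ G := Finset.dvd_prod_of_mem _ hkmem
    have hdvdP : (ℓ k) ^ N ∣ P := hdvdG.trans (Dvd.intro_left _ rfl)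
    have hlow := Statement2Aux.lowers_pderivPow_total (ℓ k) (α k j) N P hdvdP
    have h1le : 1 ≤ N - ∑ t, α k j t := by
      have := hNlt ⟨k, j⟩
      simp only at this
      omega
    have hdvd1 : ℓ k ∣ PolyExp.pderivPow (α k j) P :=
      (dvd_pow_self (ℓ k) (by omega)).trans hlow
    have hev : aeval (ξ k) (ℓ k) = 0 := by
      simp only [ℓ, dif_neg hk]
      simp
    exact Statement2Aux.aeval_zero_of_dvd (ξ k) hdvd1 hev
  -- vanishing at i0 for non-comparable multi-indices
  have hV1 : ∀ j : Fin (μ i0), ¬ (β ≤ α i0 j) → V ⟨i0, j⟩ = 0 := by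
    intro j hle
    rw [Finsupp.le_def] at hle
    push_neg at hle
    obtain ⟨t0, ht0⟩ := hle
    set c : MvPolynomial (Fin n) K := X t0 - C (ξ i0 t0) with hc
    have hcz : ∀ jj, jj ≠ t0 → pderiv jj c = 0 := by
      intro jj hjj
      simp [hc, pderiv_X_of_ne hjj.symm]
    have hdvdP : c ^ (β t0) ∣ P := by
      exact (Finset.dvd_prod_of_mem (fun t => ((X t - C (ξ i0 t) : MvPolynomial (Fin n) K)) ^ (β t))
        (Finset.mem_univ t0)).mul_right _
    have hlow := Statement2Aux.lowers_pderivPow_single t0 c hcz (α i0 j) (β t0) P hdvdP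
    have hdvd1 : c ∣ PolyExp.pderivPow (α i0 j) P :=
      (dvd_pow_self c (by omega)).trans hlow
    have hev : aeval (ξ i0) c = 0 := by simp [hc]
    exact Statement2Aux.aeval_zero_of_dvd (ξ i0) hdvd1 hev
  -- the main value
  have hVmain : V ⟨i0, j0⟩ = (∏ t : Fin n, ((Nat.factorial (β t) : K))) * aeval (ξ i0) G := by
    rw [hV]
    exact Statement2Aux.eval_pderivPow_prod (ξ i0) β G
  have hGne : aeval (ξ i0) G ≠ 0 := by
    rw [hG, map_prod]
    apply Finset.prod_ne_zero_iff.mpr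
    intro k hk
    have hk' : k ≠ i0 := (Finset.mem_erase.mp hk).1
    rw [map_pow]
    apply pow_ne_zero
    simp only [ℓ, dif_neg hk', map_sub, aeval_X, aeval_C]
    have hspec := (hsep k hk').choose_spec
    simpa [sub_eq_zero] using fun h => hspec h.symm
  have hVne : V ⟨i0, j0⟩ ≠ 0 := by
    rw [hVmain]
    apply mul_ne_zero _ hGne
    apply Finset.prod_ne_zero_iff.mpr
    intro t _
    exact Nat.cast_ne_zero.mpr (Nat.factorial_ne_zero _)
  -- collapse the sum
  have hsum : ∑ q : (i : Fin r) × Fin (μ i), g q * V q = g ⟨i0, j0⟩ * V ⟨i0, j0⟩ := by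
    apply Finset.sum_eq_single
    · rintro ⟨k, j⟩ _ hne
      by_cases hk : k = i0
      · subst hk
        by_cases hgq : g ⟨k, j⟩ = 0
        · rw [hgq, zero_mul]
        · have hjS : j ∈ S := by simp [hS, hgq]
          by_cases hle : β ≤ α k j
          · exfalso
            have hdeg : ∑ t, α k j t ≤ ∑ t, β t := hj0max j hjS
            have hdeg2 : ∑ t, β t ≤ ∑ t, α k j t :=
              Finset.sum_le_sum (fun t _ => Finsupp.le_def.mp hle t)
            have heqsum : ∑ t, β t = ∑ t, α k j t := le_antisymm hdeg2 hdeg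
            have hptwise := (Finset.sum_eq_sum_iff_of_le
              (fun t _ => Finsupp.le_def.mp hle t)).mp heqsum
            have hβeq : β = α k j := Finsupp.ext fun t => hptwise t (Finset.mem_univ t)
            have hjj : j0 = j := hα k (hβ ▸ hβeq)
            exact hne (by rw [hjj])
          · rw [hV1 j hle, mul_zero]
      · rw [hV0 ⟨k, j⟩ hk, mul_zero]
    · intro h
      exact absurd (Finset.mem_univ _) h
  rw [hsum] at hgP
  have hg0' : g ⟨i0, j0⟩ = 0 := by
    rcases mul_eq_zero.mp hgP with h | h
    · exact h
    · exact absurd h hVne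
  have : g ⟨i0, j0⟩ ≠ 0 := by
    have := Finset.mem_filter.mp (hS ▸ hj0S)
    exact this.2
  exact this hg0'
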